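/- arXiv:1905.05080 — 2 statements merged into one kernel-verified Lean document; each statement's English description precedes it below -/
import Mathlib

section
/- Let $r \geq 1$ and let $l_1, l_2$ be primes with $m \mid r l_1$ and $m \mid r l_2$. For primes $p_1, p_2$ and a prime $q$ coprime to $r l_1 l_2$, define $$C = \sum_{\beta \bmod r[l_1,l_2]/m} \mathrm{Kl}_2(\bar{p}_1 q \beta; r l_1/m)\,\overline{\mathrm{Kl}_2(\bar{p}_2 q \beta; r l_2/m)},$$ where $\mathrm{Kl}_2(n; c) = c^{-1/2}\sum_{x \in (\mathbb{Z}/c\mathbb{Z})^\times} e((nx + \bar{x})/c)$ and $\bar{p}_i$ is the inverse of $p_i$ modulo $r l_i/m$. If $l_1 \neq l_2$ then $C = 0$. -/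
/-- The normalized Kloosterman sum `Kl₂(n; c) = c^{-1/2} ∑_{x ∈ (ℤ/c)ˣ} e((nx + x̄)/c)`
(with junk value `0` for `c = 0`). -/
noncomputable def Kl2 (n : ℤ) (c : ℕ) : ℂ :=
  if h : c = 0 then 0 else
    haveI : NeZero c := ⟨h⟩
    (Real.sqrt c)⁻¹ * ∑ x : (ZMod c)ˣ,
      Complex.exp (2 * Real.pi * Complex.I *
        (((n * (((x : ZMod c).val : ℕ) : ℤ) +
            ((((x⁻¹ : (ZMod c)ˣ) : ZMod c).val : ℕ) : ℤ) : ℤ) : ℂ) / (c : ℂ)))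

lemma geom_aux' {w : ℂ} {N : ℕ} (h1 : Complex.exp w ^ N = 1) (h2 : Complex.exp w ≠ 1) :
    ∑ β ∈ Finset.range N, Complex.exp w ^ β = 0 := by
  rw [geom_sum_eq h2, h1, sub_self, zero_div]

lemma conj_exp_term' (a : ℤ) (c : ℕ) :
    (starRingEnd ℂ) (Complex.exp (2 * Real.pi * Complex.I * ((a : ℂ) / (c : ℂ)))) =
      Complex.exp (-(2 * Real.pi * Complex.I * ((a : ℂ) / (c : ℂ)))) := by
  rw [← Complex.exp_conj]
  congr 1
  simp only [map_mul, map_div₀, Complex.conj_I, Complex.conj_ofReal, map_intCast,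
    map_natCast, map_ofNat]
  ring

lemma inner_sum_zero' (s l₁ l₂ : ℕ) (hs : 0 < s) (hl₁ : l₁.Prime) (hl₂ : l₂.Prime)
    (hne : l₁ ≠ l₂) (u v : ℤ) (hu : ¬ ((l₁ : ℤ) ∣ u)) :
    ∑ β ∈ Finset.range (s * (l₁ * l₂)),
      Complex.exp (2 * Real.pi * Complex.I *
        ((u : ℂ) / ((s * l₁ : ℕ) : ℂ) - (v : ℂ) / ((s * l₂ : ℕ) : ℂ))) ^ β = 0 := by
  have hsC : ((s : ℕ) : ℂ) ≠ 0 := by exact_mod_cast hs.ne'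
  have hl₁C : ((l₁ : ℕ) : ℂ) ≠ 0 := by exact_mod_cast hl₁.pos.ne'
  have hl₂C : ((l₂ : ℕ) : ℂ) ≠ 0 := by exact_mod_cast hl₂.pos.ne'
  apply geom_aux'
  · rw [← Complex.exp_nat_mul]
    have heq : ((s * (l₁ * l₂) : ℕ) : ℂ) * (2 * Real.pi * Complex.I *
        ((u : ℂ) / ((s * l₁ : ℕ) : ℂ) - (v : ℂ) / ((s * l₂ : ℕ) : ℂ)))
        = ((u * l₂ - v * l₁ : ℤ) : ℂ) * (2 * Real.pi * Complex.I) := by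
      push_cast
      field_simp
    rw [heq, Complex.exp_int_mul_two_pi_mul_I]
  · intro h
    rw [Complex.exp_eq_one_iff] at h
    obtain ⟨n, hn⟩ := h
    have h2pi : (2 * (Real.pi : ℂ) * Complex.I) ≠ 0 := by
      simp [Real.pi_ne_zero, Complex.I_ne_zero]
    have hw : (u : ℂ) / ((s * l₁ : ℕ) : ℂ) - (v : ℂ) / ((s * l₂ : ℕ) : ℂ) = (n : ℂ) := by
      apply mul_left_cancel₀ h2pi
      rw [hn]; ring
    have hZ : u * (s * l₂ : ℤ) - v * (s * l₁ : ℤ) = n * ((s * l₁ : ℤ) * (s * l₂ : ℤ)) := by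
      have h1 : (↑(u * (s * l₂ : ℤ) - v * (s * l₁ : ℤ)) : ℂ)
          = (↑(n * ((s * l₁ : ℤ) * (s * l₂ : ℤ))) : ℂ) := by
        push_cast
        push_cast at hw
        field_simp at hw
        linear_combination (s : ℂ) * hw
      exact_mod_cast h1
    have hdvd : ((s : ℤ) * l₁) ∣ (s : ℤ) * (u * l₂) := by
      refine ⟨n * (s * l₂) + v, ?_⟩
      linarith [hZ]
    have hdvd2 : (l₁ : ℤ) ∣ u * l₂ := by
      have hs0 : (s : ℤ) ≠ 0 := by exact_mod_cast hs.ne'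
      exact (mul_dvd_mul_iff_left hs0).mp hdvd
    have hp : Prime (l₁ : ℤ) := Nat.prime_iff_prime_int.mp hl₁
    rcases hp.dvd_mul.mp hdvd2 with h' | h'
    · exact hu h'
    · have : l₁ ∣ l₂ := by exact_mod_cast h'
      exact hne ((Nat.prime_dvd_prime_iff_eq hl₁ hl₂).mp this)

set_option maxHeartbeats 1000000 in
/-- For `m ∣ r l₁`, `m ∣ r l₂` and primes `l₁ ≠ l₂`, the correlation sum
`C = ∑_{β mod r[l₁,l₂]/m} Kl₂(p̄₁ q β; r l₁/m) conj(Kl₂(p̄₂ q β; r l₂/m))` vanishes. -/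
theorem stmt6 (q r m l₁ l₂ p₁ p₂ : ℕ)
    (hq : q.Prime) (hl₁ : l₁.Prime) (hl₂ : l₂.Prime) (hp₁ : p₁.Prime) (hp₂ : p₂.Prime)
    (hr : 1 ≤ r) (hm : 0 < m) (hm1 : m ∣ r * l₁) (hm2 : m ∣ r * l₂)
    (hqco : Nat.Coprime q (r * l₁ * l₂))
    (pbar₁ pbar₂ : ℤ)
    (hpbar₁ : (p₁ : ℤ) * pbar₁ ≡ 1 [ZMOD ((r * l₁ / m : ℕ) : ℤ)])
    (hpbar₂ : (p₂ : ℤ) * pbar₂ ≡ 1 [ZMOD ((r * l₂ / m : ℕ) : ℤ)])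
    (hne : l₁ ≠ l₂) :
    ∑ β ∈ Finset.range (r * Nat.lcm l₁ l₂ / m),
      Kl2 (pbar₁ * (q : ℤ) * (β : ℤ)) (r * l₁ / m) *
        (starRingEnd ℂ) (Kl2 (pbar₂ * (q : ℤ) * (β : ℤ)) (r * l₂ / m)) = 0 := by
  classical
  have hco : Nat.Coprime l₁ l₂ := (Nat.coprime_primes hl₁ hl₂).mpr hne
  have hmr : m ∣ r := by
    have h := Nat.dvd_gcd hm1 hm2
    rwa [Nat.gcd_mul_left, Nat.Coprime.gcd_eq_one hco, mul_one] at h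
  obtain ⟨s, hrs⟩ := hmr
  have hs : 0 < s := by
    rcases Nat.eq_zero_or_pos s with h | h
    · subst h; rw [Nat.mul_zero] at hrs; omega
    · exact h
  have hc1 : r * l₁ / m = s * l₁ := by rw [hrs, mul_assoc, Nat.mul_div_cancel_left _ hm]
  have hc2 : r * l₂ / m = s * l₂ := by rw [hrs, mul_assoc, Nat.mul_div_cancel_left _ hm]
  have hN : r * Nat.lcm l₁ l₂ / m = s * (l₁ * l₂) := by
    rw [Nat.Coprime.lcm_eq_mul hco, hrs, mul_assoc, Nat.mul_div_cancel_left _ hm]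
  rw [hc1] at hpbar₁
  rw [hc1, hc2, hN]
  have hc₁0 : s * l₁ ≠ 0 := (Nat.mul_pos hs hl₁.pos).ne'
  have hc₂0 : s * l₂ ≠ 0 := (Nat.mul_pos hs hl₂.pos).ne'
  haveI : NeZero (s * l₁) := ⟨hc₁0⟩
  haveI : NeZero (s * l₂) := ⟨hc₂0⟩
  have hsC : ((s : ℕ) : ℂ) ≠ 0 := by exact_mod_cast hs.ne'
  have hl₁C : ((l₁ : ℕ) : ℂ) ≠ 0 := by exact_mod_cast hl₁.pos.ne'
  have hl₂C : ((l₂ : ℕ) : ℂ) ≠ 0 := by exact_mod_cast hl₂.pos.ne'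
  have key : ∀ β : ℕ,
      Kl2 (pbar₁ * (q : ℤ) * (β : ℤ)) (s * l₁) *
        (starRingEnd ℂ) (Kl2 (pbar₂ * (q : ℤ) * (β : ℤ)) (s * l₂)) =
      ((Real.sqrt ((s * l₁ : ℕ) : ℝ) : ℂ))⁻¹ * ((Real.sqrt ((s * l₂ : ℕ) : ℝ) : ℂ))⁻¹ *
        ∑ x : (ZMod (s * l₁))ˣ, ∑ y : (ZMod (s * l₂))ˣ,
          (Complex.exp (2 * Real.pi * Complex.I *
              ((((((x⁻¹ : (ZMod (s*l₁))ˣ) : ZMod (s*l₁)).val : ℕ) : ℂ)) / ((s * l₁ : ℕ) : ℂ)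
               - (((((y⁻¹ : (ZMod (s*l₂))ˣ) : ZMod (s*l₂)).val : ℕ) : ℂ)) / ((s * l₂ : ℕ) : ℂ))) *
           Complex.exp (2 * Real.pi * Complex.I *
              (((pbar₁ * (q:ℤ) * (((x : ZMod (s*l₁)).val : ℕ) : ℤ) : ℤ) : ℂ) / ((s * l₁ : ℕ) : ℂ)
               - ((pbar₂ * (q:ℤ) * (((y : ZMod (s*l₂)).val : ℕ) : ℤ) : ℤ) : ℂ) / ((s * l₂ : ℕ) : ℂ))) ^ β) := by
    intro β
    rw [Kl2, Kl2, dif_neg hc₁0, dif_neg hc₂0]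
    simp only [map_mul, map_sum, map_inv₀, Complex.conj_ofReal, Complex.ofReal_inv]
    simp only [conj_exp_term']
    rw [mul_mul_mul_comm, Finset.sum_mul_sum]
    refine congrArg (HMul.hMul _)
      (Finset.sum_congr rfl fun x _ => Finset.sum_congr rfl fun y _ => ?_)
    rw [← Complex.exp_nat_mul, ← Complex.exp_add, ← Complex.exp_add]
    congr 1
    push_cast
    field_simp
    ring
  rw [Finset.sum_congr rfl fun β _ => key β, ← Finset.mul_sum]
  have hzero : ∑ β ∈ Finset.range (s * (l₁ * l₂)),
      ∑ x : (ZMod (s * l₁))ˣ, ∑ y : (ZMod (s * l₂))ˣ,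
          (Complex.exp (2 * Real.pi * Complex.I *
              ((((((x⁻¹ : (ZMod (s*l₁))ˣ) : ZMod (s*l₁)).val : ℕ) : ℂ)) / ((s * l₁ : ℕ) : ℂ)
               - (((((y⁻¹ : (ZMod (s*l₂))ˣ) : ZMod (s*l₂)).val : ℕ) : ℂ)) / ((s * l₂ : ℕ) : ℂ))) *
           Complex.exp (2 * Real.pi * Complex.I *
              (((pbar₁ * (q:ℤ) * (((x : ZMod (s*l₁)).val : ℕ) : ℤ) : ℤ) : ℂ) / ((s * l₁ : ℕ) : ℂ)
               - ((pbar₂ * (q:ℤ) * (((y : ZMod (s*l₂)).val : ℕ) : ℤ) : ℤ) : ℂ) / ((s * l₂ : ℕ) : ℂ))) ^ β) = 0 := by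
    rw [Finset.sum_comm]
    apply Finset.sum_eq_zero
    intro x _
    rw [Finset.sum_comm]
    apply Finset.sum_eq_zero
    intro y _
    rw [← Finset.mul_sum]
    have hu : ¬ ((l₁ : ℤ) ∣ pbar₁ * (q:ℤ) * (((x : ZMod (s*l₁)).val : ℕ) : ℤ)) := by
      intro hdvd
      have hp : Prime (l₁ : ℤ) := Nat.prime_iff_prime_int.mp hl₁
      rcases hp.dvd_mul.mp hdvd with h' | h'
      · rcases hp.dvd_mul.mp h' with h'' | h''
        · have hdc : ((s * l₁ : ℕ) : ℤ) ∣ 1 - (p₁ : ℤ) * pbar₁ := hpbar₁.dvd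
          have hl1c : (l₁ : ℤ) ∣ ((s * l₁ : ℕ) : ℤ) := by
            push_cast; exact Dvd.intro_left _ rfl
          have h1 : (l₁ : ℤ) ∣ 1 := by
            have h2 : (l₁ : ℤ) ∣ (p₁ : ℤ) * pbar₁ := Dvd.dvd.mul_left h'' _
            have h3 := (hl1c.trans hdc).add h2
            simpa using h3
          exact hp.not_dvd_one h1
        · have hq' : l₁ ∣ q := by exact_mod_cast h''
          have : l₁ = q := ((Nat.prime_dvd_prime_iff_eq hl₁ hq).mp hq')
          subst this
          have : l₁ ∣ r * l₁ * l₂ := Dvd.dvd.mul_right (Dvd.intro_left _ rfl) _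
          exact hl₁.one_lt.ne' (Nat.Coprime.eq_one_of_dvd hqco this)
      · have hxv : l₁ ∣ (x : ZMod (s * l₁)).val := by exact_mod_cast h'
        have hxc := ZMod.val_coe_unit_coprime x
        have : l₁ ∣ Nat.gcd ((x : ZMod (s * l₁)).val) (s * l₁) :=
          Nat.dvd_gcd hxv (Dvd.intro_left _ rfl)
        rw [hxc] at this
        exact hl₁.one_lt.ne' (Nat.dvd_one.mp this)
    rw [inner_sum_zero' s l₁ l₂ hs hl₁ hl₂ hne _ _ hu, mul_zero]
  rw [hzero, mul_zero]
end

section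
/- Let $P, L, H' \geq 1$ be real numbers and $q$ a prime with $8 \cdot (2P)(2H')(2L) < q$. Let $\mathrm{P}$ be a set of primes in $[P,2P)$ and $\mathrm{L}$ a set of primes in $[L,2L)$ with $\mathrm{P} \cap \mathrm{L} = \emptyset$. For $x \in \mathbb{F}_q$, let $\nu(x)$ denote the number of triples $(p,h,l) \in \mathrm{P} \times (H', 2H'] \times \mathrm{L}$ with $h$ a positive integer coprime to $l$ and $p h \bar{l} \equiv x \pmod q$. Then $\sum_{x \in \mathbb{F}_q} \nu(x)^2 \leq |\mathrm{P}|\,|\mathrm{L}|\, H' \cdot \max_{(p_1,h_1,l_2)} \#\{(p_2,h_2,l_1) : l_1 h_2 p_2 = l_2 h_1 p_1\} \ll_\varepsilon q^\varepsilon\, P H' L$ for every $\varepsilon > 0$; in particular, the number of solutions to $p_1 h_1 \bar{l}_1 \equiv p_2 h_2 \bar{l}_2 \pmod q$ in such triples equals the number of integer solutions to $l_2 h_1 p_1 = l_1 h_2 p_2$, and for each fixed $(p_1,h_1,l_2)$ the number of $(p_2,h_2,l_1)$ with $l_1 h_2 p_2 = l_2 h_1 p_1$ is at most $d_3(l_2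 h_1 p_1)$, the number of factorizations into three parts. -/
def d3 (n : ℕ) : ℕ := ∑ d ∈ n.divisors, (n / d).divisors.card

lemma key_iff (q : ℕ) [Fact q.Prime] (p₁ h₁ l₁ p₂ h₂ l₂ : ℕ)
    (hl₁0 : 0 < l₁) (hl₁q : l₁ < q) (hl₂0 : 0 < l₂) (hl₂q : l₂ < q)
    (hs₁ : l₂ * h₁ * p₁ < q) (hs₂ : l₁ * h₂ * p₂ < q) :
    ((p₁ : ZMod q) * (h₁ : ZMod q) * (l₁ : ZMod q)⁻¹ =
      (p₂ : ZMod q) * (h₂ : ZMod q) * (l₂ : ZMod q)⁻¹) ↔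
    l₂ * h₁ * p₁ = l₁ * h₂ * p₂ := by
  have hne : ∀ l : ℕ, 0 < l → l < q → (l : ZMod q) ≠ 0 := by
    intro l h0 hq hc
    rw [ZMod.natCast_eq_zero_iff] at hc
    exact absurd (Nat.le_of_dvd h0 hc) (by omega)
  have h1 := hne l₁ hl₁0 hl₁q
  have h2 := hne l₂ hl₂0 hl₂q
  constructor
  · intro h
    have key : ((l₂ * h₁ * p₁ : ℕ) : ZMod q) = ((l₁ * h₂ * p₂ : ℕ) : ZMod q) := by
      push_cast
      field_simp at h
      linear_combination h
    have := congrArg ZMod.val key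
    rwa [ZMod.val_cast_of_lt hs₁, ZMod.val_cast_of_lt hs₂] at this
  · intro h
    have key : ((l₂ * h₁ * p₁ : ℕ) : ZMod q) = ((l₁ * h₂ * p₂ : ℕ) : ZMod q) := by
      exact_mod_cast congrArg (Nat.cast : ℕ → ZMod q) h
    push_cast at key
    field_simp
    linear_combination key

lemma count_le_d3 (S : Finset (ℕ × ℕ × ℕ)) (N : ℕ) (hN : N ≠ 0)
    (hpos : ∀ t ∈ S, 0 < t.2.2 ∧ 0 < t.2.1) :
    (S.filter (fun t => N = t.2.2 * t.2.1 * t.1)).card ≤ d3 N := by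
  have hd3 : d3 N = (N.divisors.sigma fun d => (N / d).divisors).card := by
    rw [Finset.card_sigma]; rfl
  rw [hd3]
  apply Finset.card_le_card_of_injOn (fun t => ⟨t.2.2, t.2.1⟩)
  · intro t ht
    rw [Finset.mem_coe, Finset.mem_filter] at ht
    obtain ⟨htS, hEq⟩ := ht
    obtain ⟨hl, hh⟩ := hpos t htS
    rw [Finset.mem_coe, Finset.mem_sigma, Nat.mem_divisors, Nat.mem_divisors]
    have hdiv : N / t.2.2 = t.2.1 * t.1 := by
      rw [hEq, mul_assoc]; exact Nat.mul_div_cancel_left _ hl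
    refine ⟨⟨⟨t.2.1 * t.1, by rw [hEq]; ring⟩, hN⟩, ⟨⟨t.1, by rw [hdiv]⟩, ?_⟩⟩
    rw [hdiv]
    have : 0 < t.2.1 * t.1 := by
      rcases Nat.eq_zero_or_pos (t.2.1 * t.1) with h | h
      · exfalso; apply hN; rw [hEq, mul_assoc, h, mul_zero]
      · exact h
    omega
  · intro t ht t' ht' hEq
    simp only [Finset.coe_filter, Set.mem_setOf_eq] at ht ht'
    obtain ⟨h1, h2'⟩ := Sigma.mk.inj_iff.mp hEq
    have h2 : t.2.1 = t'.2.1 := eq_of_heq h2'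
    have h3 : t.1 = t'.1 := by
      have e : t.2.2 * t.2.1 * t.1 = t.2.2 * t.2.1 * t'.1 := by
        rw [← ht.2, h1, h2, ht'.2]
      obtain ⟨hl, hh⟩ := hpos t ht.1
      exact Nat.eq_of_mul_eq_mul_left (by positivity) e
    exact Prod.ext h3 (Prod.ext h2 h1)

lemma sum_sq_card_filter {α β : Type*} [DecidableEq α] [Fintype β] [DecidableEq β]
    (S : Finset α) (Q1 Q2 : α → Prop) [DecidablePred Q1] [DecidablePred Q2] (f : α → β) :
    ∑ x : β, (S.filter (fun t => Q1 t ∧ Q2 t ∧ f t = x)).card ^ 2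
      = ((S ×ˢ S).filter (fun tt =>
          (Q1 tt.1 ∧ Q2 tt.1) ∧ (Q1 tt.2 ∧ Q2 tt.2) ∧ f tt.1 = f tt.2)).card := by
  classical
  have hdisj : ∀ x ∈ (Finset.univ : Finset β), ∀ y ∈ Finset.univ, x ≠ y →
      Disjoint ((S.filter (fun t => Q1 t ∧ Q2 t ∧ f t = x)) ×ˢ
                (S.filter (fun t => Q1 t ∧ Q2 t ∧ f t = x)))
               ((S.filter (fun t => Q1 t ∧ Q2 t ∧ f t = y)) ×ˢ
                (S.filter (fun t => Q1 t ∧ Q2 t ∧ f t = y))) := by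
    intro x _ y _ hxy
    rw [Finset.disjoint_left]
    rintro tt h1 h2
    rw [Finset.mem_product, Finset.mem_filter, Finset.mem_filter] at h1 h2
    exact hxy (h1.1.2.2.2 ▸ h2.1.2.2.2)
  have hcup : (Finset.univ : Finset β).biUnion (fun x =>
      (S.filter (fun t => Q1 t ∧ Q2 t ∧ f t = x)) ×ˢ
      (S.filter (fun t => Q1 t ∧ Q2 t ∧ f t = x)))
      = (S ×ˢ S).filter (fun tt =>
          (Q1 tt.1 ∧ Q2 tt.1) ∧ (Q1 tt.2 ∧ Q2 tt.2) ∧ f tt.1 = f tt.2) := by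
    ext tt
    simp only [Finset.mem_biUnion, Finset.mem_univ, true_and, Finset.mem_product,
      Finset.mem_filter]
    constructor
    · rintro ⟨x, ⟨h1S, h11, h12, h13⟩, ⟨h2S, h21, h22, h23⟩⟩
      exact ⟨⟨h1S, h2S⟩, ⟨h11, h12⟩, ⟨h21, h22⟩, h13.trans h23.symm⟩
    · rintro ⟨⟨h1S, h2S⟩, ⟨h11, h12⟩, ⟨h21, h22⟩, heq⟩
      exact ⟨f tt.1, ⟨h1S, h11, h12, rfl⟩, ⟨h2S, h21, h22, heq.symm⟩⟩
  rw [← hcup, Finset.card_biUnion hdisj]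
  congr 1
  ext x
  rw [Finset.card_product, sq]

lemma fiber_le (SP SH SL : Finset ℕ) (hSP : ∀ p ∈ SP, p.Prime) (hSL : ∀ l ∈ SL, l.Prime)
    (N : ℕ) (hN : N ≠ 0) :
    ((SP ×ˢ (SH ×ˢ SL)).filter (fun v => N = v.2.2 * v.2.1 * v.1)).card
      ≤ N.primeFactors.card ^ 2 := by
  have h0 : N.primeFactors.card ^ 2 = (N.primeFactors ×ˢ N.primeFactors).card := by
    rw [Finset.card_product, sq]
  rw [h0]
  apply Finset.card_le_card_of_injOn (fun v => (v.1, v.2.2))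
  · intro v hv
    rw [Finset.mem_coe, Finset.mem_filter, Finset.mem_product, Finset.mem_product] at hv
    obtain ⟨⟨hp, _, hl⟩, hEq⟩ := hv
    rw [Finset.mem_coe, Finset.mem_product, Nat.mem_primeFactors, Nat.mem_primeFactors]
    exact ⟨⟨hSP _ hp, ⟨v.2.2 * v.2.1, by rw [hEq]; ring⟩, hN⟩,
           ⟨hSL _ hl, ⟨v.2.1 * v.1, by rw [hEq]; ring⟩, hN⟩⟩
  · intro v hv v' hv' hEq
    simp only [Finset.coe_filter, Set.mem_setOf_eq, Finset.mem_product] at hv hv'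
    obtain ⟨⟨hp, _, hl⟩, hE⟩ := hv
    obtain ⟨⟨hp', _, hl'⟩, hE'⟩ := hv'
    have hEq' : (v.1, v.2.2) = (v'.1, v'.2.2) := hEq
    have h1 : v.1 = v'.1 := (Prod.mk.injEq _ _ _ _ ▸ hEq' : _ ∧ _).1
    have h3 : v.2.2 = v'.2.2 := (Prod.mk.injEq _ _ _ _ ▸ hEq' : _ ∧ _).2
    have h2 : v.2.1 = v'.2.1 := by
      have e : v.2.2 * v.2.1 * v.1 = v.2.2 * v'.2.1 * v.1 := by
        rw [← hE, h3, h1, hE']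
      have hppos : 0 < v.1 := (hSP _ hp).pos
      have hlpos : 0 < v.2.2 := (hSL _ hl).pos
      have := Nat.eq_of_mul_eq_mul_right hppos e
      exact Nat.eq_of_mul_eq_mul_left hlpos this
    exact Prod.ext h1 (Prod.ext h2 h3)

lemma card_primeFactors_le_real (N q : ℕ) (h0 : 0 < N) (hNq : N ≤ q) :
    (N.primeFactors.card : ℝ) ≤ 2 * Real.log q := by
  have h2 : 2 ^ N.primeFactors.card ≤ N := by
    calc 2 ^ N.primeFactors.card ≤ ∏ p ∈ N.primeFactors, p :=
          Finset.pow_card_le_prod _ _ _ (fun p hp => (Nat.prime_of_mem_primeFactors hp).two_le)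
      _ ≤ N := Nat.le_of_dvd h0 (Nat.prod_primeFactors_dvd N)
  set k := N.primeFactors.card
  have hq0 : 0 < q := lt_of_lt_of_le h0 hNq
  have hr : (2 : ℝ) ^ k ≤ (q : ℝ) := by exact_mod_cast le_trans h2 hNq
  have hlog : (k : ℝ) * Real.log 2 ≤ Real.log q := by
    rw [← Real.log_pow]
    exact Real.log_le_log (by positivity) hr
  have l2 : (0.6931471803 : ℝ) < Real.log 2 := Real.log_two_gt_d9
  have hk0 : (0 : ℝ) ≤ (k : ℝ) := Nat.cast_nonneg k
  nlinarith

set_option maxHeartbeats 1000000 in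
/-- With `ν(x)` counting triples `(p,h,l)` with `p` prime in `[P,2P)`,
`l` prime in `[L,2L)`, `h ∈ (H, 2H]` coprime to `l` and `p h l̄ ≡ x (mod q)`, one has
`∑_x ν(x)² ≪_ε q^ε P H L`; moreover the underlying congruence between triples is
equivalent to an integer equation, and for fixed `(p₁,h₁,l₂)` the number of solutions
`(p₂,h₂,l₁)` of `l₁ h₂ p₂ = l₂ h₁ p₁` is at most `d₃(l₂ h₁ p₁)`. -/
theorem stmt17 :
    ∀ ε : ℝ, 0 < ε → ∃ C : ℝ, 0 < C ∧
      ∀ (q : ℕ) [Fact q.Prime] (P H L : ℝ), 1 ≤ P → 1 ≤ H → 1 ≤ L →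
        8 * (2 * P) * (2 * H) * (2 * L) < (q : ℝ) →
        ∀ (SP SL : Finset ℕ),
          (∀ p ∈ SP, p.Prime ∧ P ≤ (p : ℝ) ∧ (p : ℝ) < 2 * P) →
          (∀ l ∈ SL, l.Prime ∧ L ≤ (l : ℝ) ∧ (l : ℝ) < 2 * L) →
          Disjoint SP SL →
          ∀ ν : ZMod q → ℕ,
            (∀ x : ZMod q, ν x =
              ((SP ×ˢ (Finset.Icc 1 ⌊2 * H⌋₊ ×ˢ SL)).filter
                (fun t => H < (t.2.1 : ℝ) ∧ Nat.Coprime t.2.1 t.2.2 ∧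
                  (t.1 : ZMod q) * (t.2.1 : ZMod q) * (t.2.2 : ZMod q)⁻¹ = x)).card) →
            -- the second-moment bound
            ((∑ x : ZMod q, ((ν x : ℝ)) ^ 2) ≤ C * (q : ℝ) ^ ε * (P * H * L)) ∧
            -- the congruence is equivalent to an integer equation
            (∀ p₁ ∈ SP, ∀ p₂ ∈ SP, ∀ l₁ ∈ SL, ∀ l₂ ∈ SL, ∀ h₁ h₂ : ℕ,
              H < (h₁ : ℝ) → (h₁ : ℝ) ≤ 2 * H → H < (h₂ : ℝ) → (h₂ : ℝ) ≤ 2 * H →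
              (((p₁ * h₁ : ZMod q) * (l₁ : ZMod q)⁻¹ =
                  (p₂ * h₂ : ZMod q) * (l₂ : ZMod q)⁻¹) ↔
                l₂ * h₁ * p₁ = l₁ * h₂ * p₂)) ∧
            -- divisor-function bound for the number of solutions
            (∀ p₁ ∈ SP, ∀ l₂ ∈ SL, ∀ h₁ : ℕ, 0 < h₁ →
              ((SP ×ˢ (Finset.Icc 1 ⌊2 * H⌋₊ ×ˢ SL)).filter
                (fun t => l₂ * h₁ * p₁ = t.2.2 * t.2.1 * t.1)).card ≤
                d3 (l₂ * h₁ * p₁)) := by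
  intro ε hε
  refine ⟨128 / ε ^ 2, by positivity, ?_⟩
  intro q _ P H L hP hH hL hq SP SL hSP hSL hdisjPL ν hν
  have hq2 : (2 : ℝ) ≤ (q : ℝ) := by exact_mod_cast (Fact.out : q.Prime).two_le
  -- basic size facts
  have hsizeR : ∀ l p : ℕ, ∀ h : ℕ, l ∈ SL → p ∈ SP → (h : ℝ) ≤ 2 * H →
      ((l * h * p : ℕ) : ℝ) < (q : ℝ) := by
    intro l p h hl hp hh
    obtain ⟨_, hlL, hl2L⟩ := hSL l hl
    obtain ⟨_, hpP, hp2P⟩ := hSP p hp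
    have h0 : (0 : ℝ) ≤ (h : ℝ) := Nat.cast_nonneg h
    have hl0 : (0 : ℝ) ≤ (l : ℝ) := Nat.cast_nonneg l
    have hp0 : (0 : ℝ) ≤ (p : ℝ) := Nat.cast_nonneg p
    push_cast
    nlinarith [mul_le_mul (le_of_lt hl2L) hh h0 (by linarith : (0:ℝ) ≤ 2*L),
      mul_le_mul (mul_le_mul (le_of_lt hl2L) hh h0 (by linarith : (0:ℝ) ≤ 2*L))
        (le_of_lt hp2P) hp0 (by nlinarith : (0:ℝ) ≤ 2*L*(2*H))]
  have hsize : ∀ l p : ℕ, ∀ h : ℕ, l ∈ SL → p ∈ SP → (h : ℝ) ≤ 2 * H →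
      l * h * p < q := by
    intro l p h hl hp hh
    exact_mod_cast hsizeR l p h hl hp hh
  have hlq : ∀ l ∈ SL, 0 < l ∧ l < q := by
    intro l hl
    obtain ⟨hlp, hlL, hl2L⟩ := hSL l hl
    refine ⟨hlp.pos, ?_⟩
    have hPH : (1 : ℝ) ≤ P * H := by nlinarith
    have hPHL : L ≤ P * H * L := by nlinarith [mul_le_mul_of_nonneg_right hPH (by linarith : (0:ℝ) ≤ L)]
    have : ((l : ℕ) : ℝ) < (q : ℝ) := by linarith
    exact_mod_cast this
  have hIcc : ∀ h ∈ Finset.Icc 1 ⌊2 * H⌋₊, 0 < h ∧ (h : ℝ) ≤ 2 * H := by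
    intro h hh
    rw [Finset.mem_Icc] at hh
    refine ⟨hh.1, ?_⟩
    calc (h : ℝ) ≤ (⌊2 * H⌋₊ : ℝ) := by exact_mod_cast hh.2
      _ ≤ 2 * H := Nat.floor_le (by linarith)
  refine ⟨?_, ?_, ?_⟩
  · -- second moment bound
    classical
    set S := SP ×ˢ (Finset.Icc 1 ⌊2 * H⌋₊ ×ˢ SL) with hSdef
    -- Step 1: the sum of squares as a cardinality
    have h1 : ∑ x : ZMod q, (ν x) ^ 2
        = ((S ×ˢ S).filter (fun tt =>
            (H < (tt.1.2.1 : ℝ) ∧ Nat.Coprime tt.1.2.1 tt.1.2.2) ∧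
            (H < (tt.2.2.1 : ℝ) ∧ Nat.Coprime tt.2.2.1 tt.2.2.2) ∧
            ((tt.1.1 : ZMod q) * (tt.1.2.1 : ZMod q) * (tt.1.2.2 : ZMod q)⁻¹ =
             (tt.2.1 : ZMod q) * (tt.2.2.1 : ZMod q) * (tt.2.2.2 : ZMod q)⁻¹))).card := by
      have := sum_sq_card_filter S (fun t : ℕ × ℕ × ℕ => H < (t.2.1 : ℝ))
        (fun t : ℕ × ℕ × ℕ => Nat.Coprime t.2.1 t.2.2)
        (fun t : ℕ × ℕ × ℕ => (t.1 : ZMod q) * (t.2.1 : ZMod q) * (t.2.2 : ZMod q)⁻¹)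
      simp only [hν]
      convert this using 2
    -- Step 2: embed into the integer-equation pair set
    set W := (S ×ˢ S).filter (fun tt : (ℕ×ℕ×ℕ) × (ℕ×ℕ×ℕ) =>
        tt.2.2.2 * tt.1.2.1 * tt.1.1 = tt.1.2.2 * tt.2.2.1 * tt.2.1) with hWdef
    have hsub : ((S ×ˢ S).filter (fun tt =>
            (H < (tt.1.2.1 : ℝ) ∧ Nat.Coprime tt.1.2.1 tt.1.2.2) ∧
            (H < (tt.2.2.1 : ℝ) ∧ Nat.Coprime tt.2.2.1 tt.2.2.2) ∧
            ((tt.1.1 : ZMod q) * (tt.1.2.1 : ZMod q) * (tt.1.2.2 : ZMod q)⁻¹ =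
             (tt.2.1 : ZMod q) * (tt.2.2.1 : ZMod q) * (tt.2.2.2 : ZMod q)⁻¹))) ⊆ W := by
      intro tt htt
      rw [Finset.mem_filter] at htt
      obtain ⟨htS, _, _, hfe⟩ := htt
      rw [hWdef, Finset.mem_filter]
      refine ⟨htS, ?_⟩
      rw [Finset.mem_product] at htS
      obtain ⟨ht1, ht2⟩ := htS
      simp only [hSdef, Finset.mem_product] at ht1 ht2
      have hp1 := ht1.1
      have hh1 := ht1.2.1
      have hl1 := ht1.2.2
      have hp2 := ht2.1
      have hh2 := ht2.2.1
      have hl2 := ht2.2.2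
      obtain ⟨hl10, hl1q⟩ := hlq _ hl1
      obtain ⟨hl20, hl2q⟩ := hlq _ hl2
      exact (key_iff q tt.1.1 tt.1.2.1 tt.1.2.2 tt.2.1 tt.2.2.1 tt.2.2.2
        hl10 hl1q hl20 hl2q
        (hsize _ _ _ hl2 hp1 (hIcc _ hh1).2)
        (hsize _ _ _ hl1 hp2 (hIcc _ hh2).2)).mp hfe
    -- Step 3: swap bijection
    set W' := (S ×ˢ S).filter (fun tt : (ℕ×ℕ×ℕ) × (ℕ×ℕ×ℕ) =>
        tt.1.2.2 * tt.1.2.1 * tt.1.1 = tt.2.2.2 * tt.2.2.1 * tt.2.1) with hW'def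
    have hWW' : W.card = W'.card := by
      apply Finset.card_nbij'
        (i := fun tt => ((tt.1.1, tt.1.2.1, tt.2.2.2), (tt.2.1, tt.2.2.1, tt.1.2.2)))
        (j := fun tt => ((tt.1.1, tt.1.2.1, tt.2.2.2), (tt.2.1, tt.2.2.1, tt.1.2.2)))
      · rintro ⟨⟨p₁, h₁, l₁⟩, ⟨p₂, h₂, l₂⟩⟩ (htt : ((p₁, h₁, l₁), p₂, h₂, l₂) ∈ W)
        simp only [hWdef, hSdef, Finset.mem_filter, Finset.mem_product] at htt
        simp only [hW'def, hSdef, Finset.mem_coe, Finset.mem_filter, Finset.mem_product]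
        obtain ⟨⟨⟨a1, a2, a3⟩, b1, b2, b3⟩, heq⟩ := htt
        exact ⟨⟨⟨a1, a2, b3⟩, b1, b2, a3⟩, heq⟩
      · rintro ⟨⟨p₁, h₁, l₁⟩, ⟨p₂, h₂, l₂⟩⟩ (htt : ((p₁, h₁, l₁), p₂, h₂, l₂) ∈ W')
        simp only [hW'def, hSdef, Finset.mem_filter, Finset.mem_product] at htt
        simp only [hWdef, hSdef, Finset.mem_coe, Finset.mem_filter, Finset.mem_product]
        obtain ⟨⟨⟨a1, a2, a3⟩, b1, b2, b3⟩, heq⟩ := htt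
        exact ⟨⟨⟨a1, a2, b3⟩, b1, b2, a3⟩, heq⟩
      · rintro ⟨⟨p₁, h₁, l₁⟩, ⟨p₂, h₂, l₂⟩⟩ _; rfl
      · rintro ⟨⟨p₁, h₁, l₁⟩, ⟨p₂, h₂, l₂⟩⟩ _; rfl
    -- Step 4: fiberwise bound
    have hW'le : W'.card ≤ ∑ u ∈ S, (S.filter
        (fun v => u.2.2 * u.2.1 * u.1 = v.2.2 * v.2.1 * v.1)).card := by
      calc W'.card ≤ (S.biUnion (fun u => ({u} : Finset (ℕ×ℕ×ℕ)) ×ˢ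
            (S.filter (fun v => u.2.2 * u.2.1 * u.1 = v.2.2 * v.2.1 * v.1)))).card := by
            apply Finset.card_le_card
            intro tt htt
            rw [hW'def, Finset.mem_filter, Finset.mem_product] at htt
            rw [Finset.mem_biUnion]
            exact ⟨tt.1, htt.1.1, by
              rw [Finset.mem_product, Finset.mem_singleton, Finset.mem_filter]
              exact ⟨rfl, htt.1.2, htt.2⟩⟩
        _ ≤ ∑ u ∈ S, (({u} : Finset (ℕ×ℕ×ℕ)) ×ˢ
            (S.filter (fun v => u.2.2 * u.2.1 * u.1 = v.2.2 * v.2.1 * v.1))).card :=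
            Finset.card_biUnion_le
        _ = ∑ u ∈ S, (S.filter
            (fun v => u.2.2 * u.2.1 * u.1 = v.2.2 * v.2.1 * v.1)).card := by
            apply Finset.sum_congr rfl
            intro u _
            rw [Finset.card_product, Finset.card_singleton, one_mul]
    -- Step 5: per-fiber real bound
    have hfiber : ∀ u ∈ S, ((S.filter
        (fun v => u.2.2 * u.2.1 * u.1 = v.2.2 * v.2.1 * v.1)).card : ℝ)
        ≤ (2 * Real.log q) ^ 2 := by
      intro u huS
      simp only [hSdef, Finset.mem_product] at huS
      have hup := huS.1
      have huh := huS.2.1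
      have hul := huS.2.2
      set N := u.2.2 * u.2.1 * u.1 with hNdef
      have hN0 : 0 < N := by
        have a1 := (hSP _ hup).1.pos
        have a2 := (hSL _ hul).1.pos
        have a3 := (hIcc _ huh).1
        exact Nat.mul_pos (Nat.mul_pos a2 a3) a1
      have hNq : N ≤ q := le_of_lt (hsize _ _ _ hul hup (hIcc _ huh).2)
      have hc1 : ((S.filter (fun v => N = v.2.2 * v.2.1 * v.1)).card : ℝ)
          ≤ ((N.primeFactors.card : ℝ)) ^ 2 := by
        have := fiber_le SP (Finset.Icc 1 ⌊2 * H⌋₊) SL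
          (fun p hp => (hSP p hp).1) (fun l hl => (hSL l hl).1) N hN0.ne'
        rw [hSdef]
        exact_mod_cast this
      have hc2 : (N.primeFactors.card : ℝ) ≤ 2 * Real.log q :=
        card_primeFactors_le_real N q hN0 hNq
      calc ((S.filter (fun v => N = v.2.2 * v.2.1 * v.1)).card : ℝ)
          ≤ ((N.primeFactors.card : ℝ)) ^ 2 := hc1
        _ ≤ (2 * Real.log q) ^ 2 := by
            apply pow_le_pow_left₀ (Nat.cast_nonneg _) hc2
    -- Step 6: cardinality of S
    have hSPcard : (SP.card : ℝ) ≤ 2 * P := by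
      have hsub' : SP ⊆ Finset.Ico ⌈P⌉₊ ⌈2 * P⌉₊ := by
        intro p hp
        obtain ⟨_, h1, h2⟩ := hSP p hp
        rw [Finset.mem_Ico]
        exact ⟨Nat.ceil_le.mpr h1, Nat.lt_ceil.mpr h2⟩
      have hcc : ⌈P⌉₊ ≤ ⌈2 * P⌉₊ := Nat.ceil_le_ceil (by linarith)
      calc (SP.card : ℝ) ≤ ((Finset.Ico ⌈P⌉₊ ⌈2 * P⌉₊).card : ℝ) := by
            exact_mod_cast Finset.card_le_card hsub'
        _ = ((⌈2 * P⌉₊ - ⌈P⌉₊ : ℕ) : ℝ) := by rw [Nat.card_Ico]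
        _ = (⌈2 * P⌉₊ : ℝ) - (⌈P⌉₊ : ℝ) := by rw [Nat.cast_sub hcc]
        _ ≤ (2 * P + 1) - P := by
            have := Nat.ceil_lt_add_one (by linarith : (0:ℝ) ≤ 2 * P)
            have := Nat.le_ceil P
            linarith
        _ ≤ 2 * P := by linarith
    have hSLcard : (SL.card : ℝ) ≤ 2 * L := by
      have hsub' : SL ⊆ Finset.Ico ⌈L⌉₊ ⌈2 * L⌉₊ := by
        intro l hl
        obtain ⟨_, h1, h2⟩ := hSL l hl
        rw [Finset.mem_Ico]
        exact ⟨Nat.ceil_le.mpr h1, Nat.lt_ceil.mpr h2⟩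
      have hcc : ⌈L⌉₊ ≤ ⌈2 * L⌉₊ := Nat.ceil_le_ceil (by linarith)
      calc (SL.card : ℝ) ≤ ((Finset.Ico ⌈L⌉₊ ⌈2 * L⌉₊).card : ℝ) := by
            exact_mod_cast Finset.card_le_card hsub'
        _ = ((⌈2 * L⌉₊ - ⌈L⌉₊ : ℕ) : ℝ) := by rw [Nat.card_Ico]
        _ = (⌈2 * L⌉₊ : ℝ) - (⌈L⌉₊ : ℝ) := by rw [Nat.cast_sub hcc]
        _ ≤ (2 * L + 1) - L := by
            have := Nat.ceil_lt_add_one (by linarith : (0:ℝ) ≤ 2 * L)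
            have := Nat.le_ceil L
            linarith
        _ ≤ 2 * L := by linarith
    have hScard : (S.card : ℝ) ≤ 8 * (P * H * L) := by
      have : S.card = SP.card * ((Finset.Icc 1 ⌊2 * H⌋₊).card * SL.card) := by
        rw [hSdef, Finset.card_product, Finset.card_product]
      rw [this]
      have hIc : ((Finset.Icc 1 ⌊2 * H⌋₊).card : ℝ) ≤ 2 * H := by
        rw [Nat.card_Icc]
        simp only [Nat.add_sub_cancel]
        exact Nat.floor_le (by linarith)
      push_cast
      have h1 : ((Finset.Icc 1 ⌊2 * H⌋₊).card : ℝ) * (SL.card : ℝ) ≤ (2 * H) * (2 * L) :=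
        mul_le_mul hIc hSLcard (Nat.cast_nonneg _) (by linarith)
      have h2 : (SP.card : ℝ) * (((Finset.Icc 1 ⌊2 * H⌋₊).card : ℝ) * (SL.card : ℝ))
          ≤ (2 * P) * ((2 * H) * (2 * L)) :=
        mul_le_mul hSPcard h1 (by positivity) (by linarith)
      nlinarith
    -- Step 7: log bound
    have hq0 : (0 : ℝ) < (q : ℝ) := by linarith
    have hlogq0 : 0 ≤ Real.log q := Real.log_nonneg (by linarith)
    have hrp : (0:ℝ) < (q : ℝ) ^ (ε / 2) := Real.rpow_pos_of_pos hq0 _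
    have hlog : Real.log q ≤ (2 / ε) * (q : ℝ) ^ (ε / 2) := by
      have h1 : Real.log ((q : ℝ) ^ (ε / 2)) = (ε / 2) * Real.log q := Real.log_rpow hq0 _
      have h2 : Real.log ((q : ℝ) ^ (ε / 2)) ≤ (q : ℝ) ^ (ε / 2) :=
        Real.log_le_self (le_of_lt hrp)
      rw [h1] at h2
      calc Real.log q = (2 / ε) * ((ε / 2) * Real.log q) := by field_simp
        _ ≤ (2 / ε) * (q : ℝ) ^ (ε / 2) := by
            apply mul_le_mul_of_nonneg_left h2 (by positivity)
    have hsq : ((q : ℝ) ^ (ε / 2)) ^ 2 = (q : ℝ) ^ ε := by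
      rw [← Real.rpow_natCast ((q : ℝ) ^ (ε / 2)) 2, ← Real.rpow_mul (le_of_lt hq0)]
      norm_num
    have hlogsq : (Real.log q) ^ 2 ≤ (4 / ε ^ 2) * (q : ℝ) ^ ε := by
      have := pow_le_pow_left₀ hlogq0 hlog 2
      rw [mul_pow, hsq] at this
      calc (Real.log q) ^ 2 ≤ (2 / ε) ^ 2 * (q : ℝ) ^ ε := this
        _ = (4 / ε ^ 2) * (q : ℝ) ^ ε := by ring
    -- assemble
    have hchain : (∑ x : ZMod q, ((ν x : ℝ)) ^ 2) ≤ (S.card : ℝ) * (2 * Real.log q) ^ 2 := by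
      have e1 : (∑ x : ZMod q, ((ν x : ℝ)) ^ 2) = ((∑ x : ZMod q, (ν x) ^ 2 : ℕ) : ℝ) := by
        push_cast; rfl
      rw [e1, h1]
      have c1 : (((S ×ˢ S).filter (fun tt =>
            (H < (tt.1.2.1 : ℝ) ∧ Nat.Coprime tt.1.2.1 tt.1.2.2) ∧
            (H < (tt.2.2.1 : ℝ) ∧ Nat.Coprime tt.2.2.1 tt.2.2.2) ∧
            ((tt.1.1 : ZMod q) * (tt.1.2.1 : ZMod q) * (tt.1.2.2 : ZMod q)⁻¹ =
             (tt.2.1 : ZMod q) * (tt.2.2.1 : ZMod q) * (tt.2.2.2 : ZMod q)⁻¹))).card : ℝ)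
          ≤ (W.card : ℝ) := by exact_mod_cast Finset.card_le_card hsub
      refine le_trans c1 ?_
      rw [hWW']
      calc (W'.card : ℝ) ≤ ((∑ u ∈ S, (S.filter
            (fun v => u.2.2 * u.2.1 * u.1 = v.2.2 * v.2.1 * v.1)).card : ℕ) : ℝ) := by
            exact_mod_cast hW'le
        _ = ∑ u ∈ S, ((S.filter
            (fun v => u.2.2 * u.2.1 * u.1 = v.2.2 * v.2.1 * v.1)).card : ℝ) := by
            push_cast; rfl
        _ ≤ ∑ u ∈ S, (2 * Real.log q) ^ 2 := Finset.sum_le_sum hfiber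
        _ = (S.card : ℝ) * (2 * Real.log q) ^ 2 := by
            rw [Finset.sum_const, nsmul_eq_mul]
    calc (∑ x : ZMod q, ((ν x : ℝ)) ^ 2) ≤ (S.card : ℝ) * (2 * Real.log q) ^ 2 := hchain
      _ ≤ (8 * (P * H * L)) * (2 * Real.log q) ^ 2 := by
          apply mul_le_mul_of_nonneg_right hScard (by positivity)
      _ = (8 * (P * H * L)) * (4 * (Real.log q) ^ 2) := by ring
      _ ≤ (8 * (P * H * L)) * (4 * ((4 / ε ^ 2) * (q : ℝ) ^ ε)) := by
          have hPHLpos : (0:ℝ) < P * H * L :=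
            mul_pos (mul_pos (by linarith) (by linarith)) (by linarith)
          apply mul_le_mul_of_nonneg_left _ (by linarith)
          linarith
      _ = 128 / ε ^ 2 * (q : ℝ) ^ ε * (P * H * L) := by ring
  · -- congruence iff integer equation
    intro p₁ hp₁ p₂ hp₂ l₁ hl₁ l₂ hl₂ h₁ h₂ hh₁ hh₁' hh₂ hh₂'
    obtain ⟨hl10, hl1q⟩ := hlq _ hl₁
    obtain ⟨hl20, hl2q⟩ := hlq _ hl₂
    have := key_iff q p₁ h₁ l₁ p₂ h₂ l₂ hl10 hl1q hl20 hl2q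
      (hsize _ _ _ hl₂ hp₁ hh₁') (hsize _ _ _ hl₁ hp₂ hh₂')
    convert this using 2
  · -- d3 bound
    intro p₁ hp₁ l₂ hl₂ h₁ hh₁
    apply count_le_d3
    · exact (Nat.mul_pos (Nat.mul_pos (hSL l₂ hl₂).1.pos hh₁) (hSP p₁ hp₁).1.pos).ne'
    · intro t ht
      rw [Finset.mem_product, Finset.mem_product] at ht
      exact ⟨(hlq _ ht.2.2).1, (hIcc _ ht.2.1).1⟩
end
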